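/- Let (U, V, W) be a cosuspended TTF triple in a triangulated category T whose t-structure (U, V) is nondegenerate. Then the coheart 𝒞 = V ∩ W[-1] cogenerates T: if X is an object with Hom_T(X, C[k]) = 0 for all C ∈ 𝒞 and all k ∈ ℤ, then X = 0. -/

import Mathlib

open CategoryTheory Limits Pretriangulated

universe v u

variable {C : Type u} [Category.{v} C] [Preadditive C] [HasZeroObject C] [HasShift C ℤ]
  [∀ n : ℤ, (shiftFunctor C n).Additive] [Pretriangulated C]

/-- `X` is a direct summand (retract) of `Y`. -/
def IsSummand {C : Type u} [Category.{v} C] (X Y : C) : Prop :=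
  ∃ (i : X ⟶ Y) (r : Y ⟶ X), i ≫ r = 𝟙 X

/-- A torsion pair `(𝒰, 𝒱)` in a triangulated category: both classes are closed under
direct summands, all morphisms from `𝒰` to `𝒱` vanish, and every object fits
in a triangle `U ⟶ X ⟶ V ⟶ U⟦1⟧` with `U ∈ 𝒰` and `V ∈ 𝒱`. -/
structure TorsionPair (𝒰 𝒱 : Set C) : Prop where
  summand_left : ∀ ⦃X Y : C⦄, IsSummand X Y → Y ∈ 𝒰 → X ∈ 𝒰
  summand_right : ∀ ⦃X Y : C⦄, IsSummand X Y → Y ∈ 𝒱 → X ∈ 𝒱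
  hom_zero : ∀ ⦃X Y : C⦄, X ∈ 𝒰 → Y ∈ 𝒱 → ∀ f : X ⟶ Y, f = 0
  exists_triangle : ∀ X : C, ∃ (U V : C) (_ : U ∈ 𝒰) (_ : V ∈ 𝒱)
    (f : U ⟶ X) (g : X ⟶ V) (h : V ⟶ U⟦(1 : ℤ)⟧), Triangle.mk f g h ∈ distTriang C

/- ### Auxiliary lemmas -/

lemma isSummand_of_iso {D : Type u} [Category.{v} D] {X Y : D} (e : X ≅ Y) : IsSummand X Y :=
  ⟨e.hom, e.inv, e.hom_inv_id⟩

/-- Adjunction-style vanishing transfer: maps out of a shift. -/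
lemma shift_src_zero {X Y : C} (n m : ℤ) (hnm : n + m = 0)
    (h : ∀ g : X ⟶ Y⟦m⟧, g = 0) (f : X⟦n⟧ ⟶ Y) : f = 0 := by
  apply ((shiftEquiv' C n m hnm).toAdjunction.homEquiv X Y).injective
  exact (h _).trans (h _).symm

/-- Adjunction-style vanishing transfer: maps into a shift. -/
lemma shift_tgt_zero {X Y : C} (n m : ℤ) (hnm : n + m = 0)
    (h : ∀ g : X⟦n⟧ ⟶ Y, g = 0) (f : X ⟶ Y⟦m⟧) : f = 0 := by
  apply ((shiftEquiv' C n m hnm).toAdjunction.homEquiv X Y).symm.injective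
  exact (h _).trans (h _).symm

/-- The key vanishing predicate: all maps `X ⟶ Y⟦k⟧` vanish. -/
def VanHom (X Y : C) : Prop := ∀ (k : ℤ) (f : X ⟶ Y⟦k⟧), f = 0

lemma VanHom.zero_map {X Y : C} (h : VanHom X Y) (f : X ⟶ Y) : f = 0 := by
  have h0 := h 0 (f ≫ ((shiftFunctorZero C ℤ).app Y).inv)
  have : (f ≫ ((shiftFunctorZero C ℤ).app Y).inv) ≫ ((shiftFunctorZero C ℤ).app Y).hom = f := by
    simp
  rw [← this, h0, zero_comp]

lemma VanHom.shift {X Y : C} (h : VanHom X Y) (m : ℤ) : VanHom X (Y⟦m⟧) := by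
  intro k f
  have h0 := h (m + k) (f ≫ ((shiftFunctorAdd' C m k (m + k) rfl).app Y).inv)
  have : (f ≫ ((shiftFunctorAdd' C m k (m + k) rfl).app Y).inv) ≫
      ((shiftFunctorAdd' C m k (m + k) rfl).app Y).hom = f := by simp
  rw [← this, h0, zero_comp]

lemma VanHom.of_iso {X Y Z : C} (e : Y ≅ Z) (h : VanHom X Z) : VanHom X Y := by
  intro k f
  have h0 := h k (f ≫ (shiftFunctor C k).map e.hom)
  have : (f ≫ (shiftFunctor C k).map e.hom) ≫ (shiftFunctor C k).map e.inv = f := by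
    rw [Category.assoc, ← Functor.map_comp, e.hom_inv_id, CategoryTheory.Functor.map_id,
      Category.comp_id]
  rw [← this, h0, zero_comp]

lemma VanHom.shift_src {X Y : C} (h : VanHom X Y) (n : ℤ) : VanHom (X⟦n⟧) Y := by
  intro k f
  exact shift_src_zero n (-n) (by ring) (fun g => (h.shift k) (-n) g) f

/-- `VanHom` is closed under extensions (two-out-of-three in triangles). -/
lemma VanHom.ext {X : C} (T : Triangle C) (hT : T ∈ distTriang C)
    (h1 : VanHom X T.obj₁) (h3 : VanHom X T.obj₃) : VanHom X T.obj₂ := by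
  intro k f
  have hT' : (Triangle.shiftFunctor C k).obj T ∈ distTriang C :=
    Triangle.shift_distinguished T hT k
  obtain ⟨g, hg⟩ := Triangle.coyoneda_exact₂ _ hT'
    (f : X ⟶ ((Triangle.shiftFunctor C k).obj T).obj₂)
    (h3 k (f ≫ ((Triangle.shiftFunctor C k).obj T).mor₂))
  rw [hg, h1 k g]; exact zero_comp

section TTF

variable {𝒰 𝒱 𝒲 : Set C}

/-- Membership in the right class via perpendicularity. -/
lemma mem_right_of_perp (h₂ : TorsionPair 𝒱 𝒲) {A : C}
    (h : ∀ V ∈ 𝒱, ∀ f : V ⟶ A, f = 0) : A ∈ 𝒲 := by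
  obtain ⟨V, W, hV, hW, f, g, c, hT⟩ := h₂.exists_triangle A
  obtain ⟨r, hr⟩ := Triangle.yoneda_exact₂ _ hT (𝟙 A)
    (by rw [show (Triangle.mk f g c).mor₁ = f from rfl, h V hV f]; exact zero_comp)
  exact h₂.summand_right ⟨g, r, hr.symm⟩ hW

/-- Membership in the left class via perpendicularity. -/
lemma mem_left_of_perp (h₂ : TorsionPair 𝒱 𝒲) {A : C}
    (h : ∀ W ∈ 𝒲, ∀ f : A ⟶ W, f = 0) : A ∈ 𝒱 := by
  obtain ⟨V, W, hV, hW, f, g, c, hT⟩ := h₂.exists_triangle A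
  obtain ⟨i, hi⟩ := Triangle.coyoneda_exact₂ _ hT (𝟙 A)
    (by rw [show (Triangle.mk f g c).mor₂ = g from rfl, h W hW g]; exact comp_zero)
  exact h₂.summand_left ⟨i, f, hi.symm⟩ hV

/-- The left class of a torsion pair is closed under extensions. -/
lemma left_ext (h₂ : TorsionPair 𝒱 𝒲) (T : Triangle C) (hT : T ∈ distTriang C)
    (hA : T.obj₁ ∈ 𝒱) (hB : T.obj₃ ∈ 𝒱) : T.obj₂ ∈ 𝒱 := by
  refine mem_left_of_perp h₂ (fun W hW f => ?_)
  obtain ⟨g, hg⟩ := Triangle.yoneda_exact₂ _ hT f (h₂.hom_zero hA hW _)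
  rw [hg, h₂.hom_zero hB hW g, comp_zero]

/-- The right class of a torsion pair is closed under extensions. -/
lemma right_ext (h₂ : TorsionPair 𝒱 𝒲) (T : Triangle C) (hT : T ∈ distTriang C)
    (hA : T.obj₁ ∈ 𝒲) (hB : T.obj₃ ∈ 𝒲) : T.obj₂ ∈ 𝒲 := by
  refine mem_right_of_perp h₂ (fun V hV f => ?_)
  obtain ⟨g, hg⟩ := Triangle.coyoneda_exact₂ _ hT f (h₂.hom_zero hV hB _)
  rw [hg, h₂.hom_zero hV hA g, zero_comp]

/-- `𝒰` is closed under nonnegative shifts. -/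
lemma U_shift_nonneg (h₁ : TorsionPair 𝒰 𝒱) (ht : ∀ X ∈ 𝒰, X⟦(1 : ℤ)⟧ ∈ 𝒰)
    (n : ℤ) (hn : 0 ≤ n) {Y : C} (hY : Y ∈ 𝒰) : Y⟦n⟧ ∈ 𝒰 := by
  have key : ∀ (k : ℕ) {W : C}, W ∈ 𝒰 → W⟦((k : ℕ) : ℤ)⟧ ∈ 𝒰 := by
    intro k
    induction k with
    | zero =>
      intro W hW
      simp only [Nat.cast_zero]
      exact h₁.summand_left (isSummand_of_iso ((shiftFunctorZero C ℤ).app W)) hW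
    | succ k ih =>
      intro W hW
      have e : (W⟦((k + 1 : ℕ) : ℤ)⟧ : C) ≅ ((W⟦((k : ℕ) : ℤ)⟧)⟦(1 : ℤ)⟧ : C) :=
        (shiftFunctorAdd' C ((k : ℕ) : ℤ) 1 (((k + 1 : ℕ) : ℤ)) (by push_cast; ring)).app W
      exact h₁.summand_left (isSummand_of_iso e) (ht _ (ih hW))
  rw [show n = ((n.toNat : ℕ) : ℤ) by omega]
  exact key _ hY

/-- `𝒱` is closed under negative natural shifts. -/
lemma V_shift_neg_nat (h₂ : TorsionPair 𝒱 𝒲) (hco : ∀ X ∈ 𝒱, X⟦(-1 : ℤ)⟧ ∈ 𝒱) :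
    ∀ (k : ℕ) {Y : C}, Y ∈ 𝒱 → Y⟦(-(k : ℤ))⟧ ∈ 𝒱 := by
  intro k
  induction k with
  | zero =>
    intro Y hY
    simp only [Nat.cast_zero, neg_zero]
    exact h₂.summand_left (isSummand_of_iso ((shiftFunctorZero C ℤ).app Y)) hY
  | succ k ih =>
    intro Y hY
    have e : (Y⟦(-((k + 1 : ℕ) : ℤ))⟧ : C) ≅ ((Y⟦(-(k : ℤ))⟧)⟦(-1 : ℤ)⟧ : C) :=
      (shiftFunctorAdd' C (-(k : ℤ)) (-1) (-((k + 1 : ℕ) : ℤ)) (by push_cast; ring)).app Y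
    exact h₂.summand_left (isSummand_of_iso e) (hco _ (ih hY))

/-- `𝒱` is closed under nonpositive shifts. -/
lemma V_shift_nonpos (h₂ : TorsionPair 𝒱 𝒲) (hco : ∀ X ∈ 𝒱, X⟦(-1 : ℤ)⟧ ∈ 𝒱)
    (n : ℤ) (hn : n ≤ 0) {Y : C} (hY : Y ∈ 𝒱) : Y⟦n⟧ ∈ 𝒱 := by
  rw [show n = -(((-n).toNat : ℕ) : ℤ) by omega]
  exact V_shift_neg_nat h₂ hco _ hY

/-- `𝒲` is closed under nonnegative shifts. -/
lemma W_shift_nonneg (h₂ : TorsionPair 𝒱 𝒲) (hco : ∀ X ∈ 𝒱, X⟦(-1 : ℤ)⟧ ∈ 𝒱)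
    (n : ℤ) (hn : 0 ≤ n) {Y : C} (hY : Y ∈ 𝒲) : Y⟦n⟧ ∈ 𝒲 := by
  have one : ∀ {W : C}, W ∈ 𝒲 → W⟦(1 : ℤ)⟧ ∈ 𝒲 := by
    intro W hW
    refine mem_right_of_perp h₂ (fun V hV f => ?_)
    exact shift_tgt_zero (-1) 1 (by ring) (fun g => h₂.hom_zero (hco V hV) hW g) f
  have key : ∀ (k : ℕ) {W : C}, W ∈ 𝒲 → W⟦((k : ℕ) : ℤ)⟧ ∈ 𝒲 := by
    intro k
    induction k with
    | zero =>
      intro W hW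
      simp only [Nat.cast_zero]
      exact h₂.summand_right (isSummand_of_iso ((shiftFunctorZero C ℤ).app W)) hW
    | succ k ih =>
      intro W hW
      have e : (W⟦((k + 1 : ℕ) : ℤ)⟧ : C) ≅ ((W⟦((k : ℕ) : ℤ)⟧)⟦(1 : ℤ)⟧ : C) :=
        (shiftFunctorAdd' C ((k : ℕ) : ℤ) 1 (((k + 1 : ℕ) : ℤ)) (by push_cast; ring)).app W
      exact h₂.summand_right (isSummand_of_iso e) (one (ih hW))
  rw [show n = ((n.toNat : ℕ) : ℤ) by omega]
  exact key _ hY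

/-- Shifting a decomposition triangle of `Y⟦n⟧` down by `n`. -/
lemma shift_triangle (n : ℤ) {A Y B : C} (f : A ⟶ Y⟦n⟧) (g : Y⟦n⟧ ⟶ B)
    (h : B ⟶ A⟦(1 : ℤ)⟧) (hT : Triangle.mk f g h ∈ distTriang C) :
    ∃ (f' : A⟦-n⟧ ⟶ Y) (g' : Y ⟶ B⟦-n⟧) (h' : B⟦-n⟧ ⟶ (A⟦-n⟧)⟦(1 : ℤ)⟧),
      Triangle.mk f' g' h' ∈ distTriang C := by
  set T' := (Triangle.shiftFunctor C (-n)).obj (Triangle.mk f g h) with hT'def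
  have hT' : T' ∈ distTriang C := Triangle.shift_distinguished _ hT (-n)
  set e : ((Y⟦n⟧)⟦-n⟧ : C) ≅ Y := (shiftFunctorCompIsoId C n (-n) (by ring)).app Y with he
  refine ⟨T'.mor₁ ≫ e.hom, e.inv ≫ T'.mor₂, T'.mor₃, ?_⟩
  refine Pretriangulated.isomorphic_distinguished _ hT' _ ?_
  refine Triangle.isoMk _ _ (Iso.refl _) e.symm (Iso.refl _) ?_ ?_ ?_
  · simp [Triangle.mk]
    exact (Category.assoc _ _ _).trans ((congrArg _ e.hom_inv_id).trans
      ((Category.comp_id _).trans (Category.id_comp _).symm))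
  · simp [Triangle.mk]
    exact Category.comp_id _
  · simp [Triangle.mk]
    exact ((congrArg _ (CategoryTheory.Functor.map_id _ _)).trans (Category.comp_id _)).trans
      (Category.id_comp _).symm

/-- Key induction: if `Y ∈ 𝒱` and `Y⟦n⟧ ∈ 𝒲` for a natural number `n`, then all maps
from `X` to all shifts of `Y` vanish, provided `X` kills the coheart. -/
lemma vanHom_of_bounded (h₂ : TorsionPair 𝒱 𝒲) (hco : ∀ X ∈ 𝒱, X⟦(-1 : ℤ)⟧ ∈ 𝒱)
    (X : C)
    (hX : ∀ Cc : C, Cc ∈ 𝒱 → Cc⟦(1 : ℤ)⟧ ∈ 𝒲 → ∀ k : ℤ, ∀ f : X ⟶ Cc⟦k⟧, f = 0) :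
    ∀ (n : ℕ) (Y : C), Y ∈ 𝒱 → Y⟦(n : ℤ)⟧ ∈ 𝒲 → VanHom X Y := by
  intro n
  induction n using Nat.strong_induction_on with
  | _ n ih =>
    match n with
    | 0 =>
      intro Y hV hW
      rw [Nat.cast_zero] at hW
      have hYW : Y ∈ 𝒲 :=
        h₂.summand_right (isSummand_of_iso ((shiftFunctorZero C ℤ).app Y).symm) hW
      have hz : IsZero Y := (IsZero.iff_id_eq_zero Y).2 (h₂.hom_zero hV hYW (𝟙 Y))
      intro k f
      exact ((shiftFunctor C k).map_isZero hz).eq_zero_of_tgt f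
    | 1 =>
      intro Y hV hW
      rw [Nat.cast_one] at hW
      exact fun k f => hX Y hV hW k f
    | (m + 2) =>
      intro Y hV hW
      push_cast at hW
      -- decompose Y⟦1⟧ with respect to (𝒱, 𝒲)
      obtain ⟨V₁, W₁, hV₁, hW₁, a, b, c, hTd⟩ := h₂.exists_triangle (Y⟦(1 : ℤ)⟧)
      obtain ⟨f', g', h', hT'⟩ := shift_triangle 1 a b c hTd
      -- the cone `W₁⟦-1⟧` is in the coheart
      have hC_V : (W₁⟦(-1 : ℤ)⟧ : C) ∈ 𝒱 := by
        refine left_ext h₂ _ (rot_of_distTriang _ hT') hV ?_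
        refine h₂.summand_left (isSummand_of_iso ?_) hV₁
        exact ((shiftFunctorCompIsoId C (-1) 1 (by ring)).app V₁)
      have hC_W : ((W₁⟦(-1 : ℤ)⟧ : C)⟦(1 : ℤ)⟧) ∈ 𝒲 := by
        refine h₂.summand_right (isSummand_of_iso ?_) hW₁
        exact ((shiftFunctorCompIsoId C (-1) 1 (by ring)).app W₁)
      -- `V₁⟦m+1⟧ ∈ 𝒲` by extension closure
      have hV₁W : (V₁⟦((m : ℤ) + 1)⟧ : C) ∈ 𝒲 := by
        have hTinv := inv_rot_of_distTriang _ hTd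
        have hTsh := Triangle.shift_distinguished _ hTinv ((m : ℤ) + 1)
        refine right_ext h₂ _ hTsh ?_ ?_
        · refine h₂.summand_right (isSummand_of_iso
            ((shiftFunctorAdd' C (-1) ((m : ℤ) + 1) ((m : ℤ))
              (by ring)).symm.app W₁)) ?_
          exact W_shift_nonneg h₂ hco _ (by positivity) hW₁
        · refine h₂.summand_right (isSummand_of_iso
            ((shiftFunctorAdd' C 1 ((m : ℤ) + 1) ((m : ℤ) + 2)
              (by ring)).symm.app Y)) ?_
          exact hW
      -- apply the induction hypothesis to `V₁`
      have hVan₁ : VanHom X V₁ := by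
        refine ih (m + 1) (by omega) V₁ hV₁ ?_
        push_cast
        exact hV₁W
      -- conclude by the extension property of `VanHom`
      refine VanHom.ext (Triangle.mk f' g' h') hT' ?_ ?_
      · exact hVan₁.shift (-1)
      · exact fun k f => hX _ hC_V hC_W k f

/-- The heart of the argument: an object killing the coheart lies in `𝒰`. -/
lemma mem_U_of_vanishing (h₁ : TorsionPair 𝒰 𝒱) (h₂ : TorsionPair 𝒱 𝒲)
    (ht : ∀ X ∈ 𝒰, X⟦(1 : ℤ)⟧ ∈ 𝒰) (hco : ∀ X ∈ 𝒱, X⟦(-1 : ℤ)⟧ ∈ 𝒱)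
    (hnd₂ : ∀ X : C, (∀ n : ℤ, X⟦n⟧ ∈ 𝒱) → IsZero X)
    (X : C)
    (hX : ∀ Cc : C, Cc ∈ 𝒱 → Cc⟦(1 : ℤ)⟧ ∈ 𝒲 → ∀ k : ℤ, ∀ f : X ⟶ Cc⟦k⟧, f = 0) :
    X ∈ 𝒰 := by
  obtain ⟨U, V, hU, hV, u, g, h, hT⟩ := h₁.exists_triangle X
  have hVz : IsZero V := by
    refine hnd₂ V (fun n => ?_)
    rcases le_or_gt n 0 with hn | hn
    · exact V_shift_nonpos h₂ hco n hn hV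
    · -- decompose `V⟦n⟧` with respect to `(𝒱, 𝒲)` and shift down
      obtain ⟨V', W', hV', hW', a, b, c, hTd⟩ := h₂.exists_triangle (V⟦n⟧)
      obtain ⟨β, δ, h', hT'⟩ := shift_triangle n a b c hTd
      have hB_V : (V'⟦-n⟧ : C) ∈ 𝒱 := V_shift_nonpos h₂ hco (-n) (by omega) hV'
      have hD_V : (W'⟦-n⟧ : C) ∈ 𝒱 := by
        refine left_ext h₂ _ (rot_of_distTriang _ hT') hV ?_
        refine h₂.summand_left (isSummand_of_iso
          ((shiftFunctorAdd' C (-n) 1 (1 - n) (by ring)).symm.app V')) ?_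
        exact V_shift_nonpos h₂ hco (1 - n) (by omega) hV'
      have hD_W : ((W'⟦-n⟧ : C)⟦((n.toNat : ℕ) : ℤ)⟧) ∈ 𝒲 := by
        rw [Int.toNat_of_nonneg hn.le]
        refine h₂.summand_right (isSummand_of_iso
          ((shiftFunctorCompIsoId C (-n) n (by ring)).app W')) hW'
      have hVanD : VanHom X (W'⟦-n⟧) :=
        vanHom_of_bounded h₂ hco X hX n.toNat _ hD_V hD_W
      -- `g` factors through `β : V'⟦-n⟧ ⟶ V`
      obtain ⟨φ, hφ⟩ : ∃ φ : X ⟶ V'⟦-n⟧, g = φ ≫ β := Triangle.coyoneda_exact₂ _ hT' g (hVanD.zero_map (g ≫ δ))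
      -- `φ` factors through `g`
      obtain ⟨ψ, hψ₀⟩ : ∃ ψ : V ⟶ V'⟦-n⟧, φ = g ≫ ψ := Triangle.yoneda_exact₂ _ hT φ (h₁.hom_zero hU hB_V (u ≫ φ))
      have hψ : φ = g ≫ ψ := hψ₀
      have hφ' : g = φ ≫ β := hφ
      -- `ψ ≫ β = 𝟙 V`
      have key : g ≫ ((show V ⟶ V from ψ ≫ β) - 𝟙 V) = 0 := by
        have hgg : g ≫ (show V ⟶ V from ψ ≫ β) = g := by
          show g ≫ ψ ≫ β = g
          rw [← Category.assoc, ← hψ, ← hφ']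
        rw [Preadditive.comp_sub, hgg, Category.comp_id, sub_self]
      obtain ⟨s, hs⟩ := Triangle.yoneda_exact₃ _ hT ((show V ⟶ V from ψ ≫ β) - 𝟙 V) key
      have hs0 : s = 0 := h₁.hom_zero (ht U hU) hV s
      rw [hs0, comp_zero] at hs
      have hid : ψ ≫ β = 𝟙 V := sub_eq_zero.mp hs
      -- `V⟦n⟧` is a summand of `V' ∈ 𝒱`
      set e : ((V'⟦-n⟧ : C)⟦n⟧ : C) ≅ V' := (shiftFunctorCompIsoId C (-n) n (by ring)).app V'
      refine h₁.summand_right ⟨(shiftFunctor C n).map ψ ≫ e.hom,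
        e.inv ≫ (shiftFunctor C n).map β, ?_⟩ hV'
      rw [Category.assoc, ← Category.assoc e.hom, e.hom_inv_id, Category.id_comp,
        ← Functor.map_comp, hid, CategoryTheory.Functor.map_id]
  -- now `g = 0`, so `X` is a summand of `U`
  have hg : g = 0 := hVz.eq_zero_of_tgt g
  obtain ⟨i, hi⟩ := Triangle.coyoneda_exact₂ _ hT (𝟙 X)
    (by rw [show (Triangle.mk u g h).mor₂ = g from rfl, hg]; exact comp_zero)
  exact h₁.summand_left ⟨i, u, hi.symm⟩ hU

end TTF

/-- For a cosuspended TTF triple `(𝒰, 𝒱, 𝒲)` with nondegenerate t-structure `(𝒰, 𝒱)`,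
the coheart `𝒞 = 𝒱 ∩ 𝒲⟦-1⟧` cogenerates `T`: an object `X` with `Hom(X, Cc⟦k⟧) = 0` for
all `Cc ∈ 𝒞` and all `k ∈ ℤ` is zero. -/
theorem stmt12 (𝒰 𝒱 𝒲 : Set C)
    (h₁ : TorsionPair 𝒰 𝒱) (h₂ : TorsionPair 𝒱 𝒲)
    (ht : ∀ X ∈ 𝒰, X⟦(1 : ℤ)⟧ ∈ 𝒰) (hco : ∀ X ∈ 𝒱, X⟦(-1 : ℤ)⟧ ∈ 𝒱)
    (hnd₁ : ∀ X : C, (∀ n : ℤ, X⟦n⟧ ∈ 𝒰) → IsZero X)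
    (hnd₂ : ∀ X : C, (∀ n : ℤ, X⟦n⟧ ∈ 𝒱) → IsZero X)
    (X : C)
    (hX : ∀ Cc : C, Cc ∈ 𝒱 → Cc⟦(1 : ℤ)⟧ ∈ 𝒲 → ∀ k : ℤ, ∀ f : X ⟶ Cc⟦k⟧, f = 0) :
    IsZero X := by
  refine hnd₁ X (fun n => ?_)
  refine mem_U_of_vanishing h₁ h₂ ht hco hnd₂ (X⟦n⟧) ?_
  intro Cc hV hW k f
  have hvan : VanHom X Cc := fun k' f' => hX Cc hV hW k' f'
  exact (hvan.shift_src n) k f
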